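/- There exist three points c₀, c₁, c₂ in the hyperbolic plane ℍ such that the composition g = f_{c₂} ∘ f_{c₁} ∘ f_{c₀} of the point reflections at c₂, c₁, c₀ satisfies g ≠ id and g ∘ g ∘ g = id (i.e., g is a rotation of order 3 about some point of ℍ). -/

import Mathlib

open UpperHalfPlane
open Matrix MatrixGroups

noncomputable def Am : SL(2, ℝ) := ⟨!![0,-1;1,0], by simp [Matrix.det_fin_two_of]⟩
noncomputable def Bm : SL(2, ℝ) := ⟨!![0,2;-(1/2),0], by norm_num [Matrix.det_fin_two_of]⟩
noncomputable def Cm : SL(2, ℝ) :=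
  ⟨!![2/3,13/3;-(1/3),-(2/3)], by norm_num [Matrix.det_fin_two_of]⟩

noncomputable def c0 : ℍ := ⟨Complex.I, by simp⟩
noncomputable def c1 : ℍ := ⟨2 * Complex.I, by simp⟩
noncomputable def c2 : ℍ := ⟨-2 + 3 * Complex.I, by simp⟩

lemma coeB (x : ℍ) : ((Bm • x : ℍ) : ℂ) = 2 / (-(1/2) * (x : ℂ)) := by
  rw [UpperHalfPlane.specialLinearGroup_apply]; simp [Bm]

lemma coeC (x : ℍ) : ((Cm • x : ℍ) : ℂ)
    = ((2/3) * x + 13/3) / (-(1/3) * (x : ℂ) + -(2/3)) := by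
  rw [UpperHalfPlane.specialLinearGroup_apply]; simp [Cm]


lemma coeA (x : ℍ) : ((Am • x : ℍ) : ℂ) = (-1) / (x : ℂ) := by
  rw [UpperHalfPlane.specialLinearGroup_apply]; simp [Am]

lemma fixA (x : ℍ) : Am • x = x ↔ x = c0 := by
  constructor
  · intro h
    have hco : ((Am • x : ℍ) : ℂ) = x := by rw [h]
    rw [coeA] at hco
    have hx : (x : ℂ) ≠ 0 := x.ne_zero
    have h2 : ((x:ℂ) - Complex.I) * ((x:ℂ) + Complex.I) = 0 := by
      field_simp at hco
      linear_combination -hco - Complex.I_sq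
    rcases mul_eq_zero.1 h2 with h3 | h3
    · ext; rw [sub_eq_zero] at h3; exact h3
    · exfalso
      have h4 := congrArg Complex.im h3
      simp [UpperHalfPlane.coe_im] at h4
      linarith [x.im_pos]
  · rintro rfl
    ext
    rw [coeA]
    show (-1) / (Complex.I) = Complex.I
    simp

lemma fixB (x : ℍ) : Bm • x = x ↔ x = c1 := by
  constructor
  · intro h
    have hco : ((Bm • x : ℍ) : ℂ) = x := by rw [h]
    rw [coeB] at hco
    have hx : (x : ℂ) ≠ 0 := x.ne_zero
    have h2 : ((x:ℂ) - 2*Complex.I) * ((x:ℂ) + 2*Complex.I) = 0 := by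
      rw [div_eq_iff (by simp [Complex.I_ne_zero, hx] : -(1/2) * (x:ℂ) ≠ 0)] at hco
      linear_combination 2*hco - 4*Complex.I_sq
    rcases mul_eq_zero.1 h2 with h3 | h3
    · ext; rw [sub_eq_zero] at h3; exact h3
    · exfalso
      have h4 := congrArg Complex.im h3
      simp [UpperHalfPlane.coe_im] at h4
      linarith [x.im_pos]
  · rintro rfl
    ext
    rw [coeB]
    show 2 / (-(1/2) * (2*Complex.I)) = 2*Complex.I
    rw [div_eq_iff (by simp [Complex.I_ne_zero] : -(1/2) * (2*Complex.I) ≠ 0)]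
    linear_combination 2*Complex.I_sq

lemma fixC (x : ℍ) : Cm • x = x ↔ x = c2 := by
  have hd : -(1/3) * (x : ℂ) + -(2/3) ≠ 0 := by
    intro h
    have h4 := congrArg Complex.im h
    simp [UpperHalfPlane.coe_im] at h4
    linarith [x.im_pos]
  constructor
  · intro h
    have hco : ((Cm • x : ℍ) : ℂ) = x := by rw [h]
    rw [coeC] at hco
    have h2 : ((x:ℂ) - (-2 + 3*Complex.I)) * ((x:ℂ) - (-2 - 3*Complex.I)) = 0 := by
      rw [div_eq_iff hd] at hco
      linear_combination 3*hco - 9*Complex.I_sq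
    rcases mul_eq_zero.1 h2 with h3 | h3
    · ext; rw [sub_eq_zero] at h3; exact h3
    · exfalso
      have h4 := congrArg Complex.im h3
      simp [UpperHalfPlane.coe_im] at h4
      linarith [x.im_pos]
  · rintro rfl
    ext
    rw [coeC]
    show ((2/3) * (-2 + 3*Complex.I) + 13/3) / (-(1/3) * (-2 + 3*Complex.I) + -(2/3))
        = -2 + 3*Complex.I
    rw [div_eq_iff]
    · linear_combination 3*Complex.I_sq
    · intro h
      have h4 := congrArg Complex.im h
      simp at h4

lemma neg_one_smul_H (x : ℍ) : (-1 : SL(2,ℝ)) • x = x := by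
  ext
  rw [UpperHalfPlane.specialLinearGroup_apply]
  have hx : (x : ℂ) ≠ 0 := x.ne_zero
  simp

lemma A2 : Am * Am = -1 := by
  ext i j
  simp only [Matrix.SpecialLinearGroup.coe_mul]
  fin_cases i <;> fin_cases j <;>
    norm_num [Am, Matrix.mul_apply, Fin.sum_univ_two]

lemma B2 : Bm * Bm = -1 := by
  ext i j
  simp only [Matrix.SpecialLinearGroup.coe_mul]
  fin_cases i <;> fin_cases j <;>
    norm_num [Bm, Matrix.mul_apply, Fin.sum_univ_two]

lemma C2 : Cm * Cm = -1 := by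
  ext i j
  simp only [Matrix.SpecialLinearGroup.coe_mul]
  fin_cases i <;> fin_cases j <;>
    norm_num [Cm, Matrix.mul_apply, Fin.sum_univ_two]

lemma G3 : Cm * (Bm * (Am * (Cm * (Bm * (Am * (Cm * (Bm * Am))))))) = -1 := by
  ext i j
  simp only [Matrix.SpecialLinearGroup.coe_mul]
  fin_cases i <;> fin_cases j <;>
    norm_num [Am, Bm, Cm, Matrix.mul_apply, Fin.sum_univ_two]


/-- A point reflection of the hyperbolic plane at `c`: an involutive isometry whose
unique fixed point is `c`. -/
def IsPointReflection (f : ℍ ≃ᵢ ℍ) (c : ℍ) : Prop :=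
  (∀ x, f (f x) = x) ∧ (∀ x, f x = x ↔ x = c)

/-- There exist three points of the hyperbolic plane such that the composition of the
point reflections at them is a nontrivial isometry of order 3 (a rotation by `2π/3`). -/
theorem exists_three_point_reflections_composition_order_three :
    ∃ (c₀ c₁ c₂ : ℍ) (f₀ f₁ f₂ : ℍ ≃ᵢ ℍ),
      IsPointReflection f₀ c₀ ∧ IsPointReflection f₁ c₁ ∧ IsPointReflection f₂ c₂ ∧
      (⇑f₂ ∘ ⇑f₁ ∘ ⇑f₀) ≠ id ∧
      (⇑f₂ ∘ ⇑f₁ ∘ ⇑f₀) ∘ (⇑f₂ ∘ ⇑f₁ ∘ ⇑f₀) ∘ (⇑f₂ ∘ ⇑f₁ ∘ ⇑f₀) = id := by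
  refine ⟨c0, c1, c2, IsometryEquiv.constSMul Am, IsometryEquiv.constSMul Bm,
    IsometryEquiv.constSMul Cm,
    ⟨fun x => ?_, fixA⟩, ⟨fun x => ?_, fixB⟩, ⟨fun x => ?_, fixC⟩, ?_, ?_⟩
  · show Am • Am • x = x
    rw [smul_smul, A2, neg_one_smul_H]
  · show Bm • Bm • x = x
    rw [smul_smul, B2, neg_one_smul_H]
  · show Cm • Cm • x = x
    rw [smul_smul, C2, neg_one_smul_H]
  · intro h
    have h0 : Cm • (Bm • (Am • c0)) = c0 := congrFun h c0
    rw [(fixA c0).2 rfl] at h0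
    have hb : ((Bm • c0 : ℍ) : ℂ) = 4 * Complex.I := by
      rw [coeB]
      show 2 / (-(1/2) * Complex.I) = _
      rw [div_eq_iff (by simp [Complex.I_ne_zero] : -(1/2) * Complex.I ≠ 0)]
      linear_combination 2*Complex.I_sq
    have hc : ((Cm • (Bm • c0) : ℍ) : ℂ) = Complex.I := congrArg _ h0
    rw [coeC, hb] at hc
    rw [div_eq_iff (by
      intro hcon
      have := congrArg Complex.im hcon
      simp at this : -(1/3) * (4 * Complex.I) + -(2/3) ≠ 0)] at hc
    have hre := congrArg Complex.re hc
    simp at hre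
    norm_num at hre
  · funext x
    show Cm • Bm • Am • (Cm • Bm • Am • (Cm • Bm • Am • x)) = x
    simp only [smul_smul, mul_assoc]
    rw [G3, neg_one_smul_H]
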